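/- Let F be a twice differentiable cdf with right-bounded support (i.e., F(b) = 1 for some finite b) and G a cdf with positive density on all of ℝ. Then the function k(x) = F^{-1}(G(x)) cannot be strictly convex on ℝ; consequently an investor whose terminal wealth distribution has right-bounded support cannot exhibit (globally) decreasing absolute risk aversion. -/

import Mathlib

open Filter

/-- If the target distribution `F` has right-bounded support and `G`
is a cdf taking values in `(0,1)`, then `k(x) = F⁻¹(G(x))` cannot be strictly convex
on `ℝ`; hence no globally DARA investor demands a right-bounded distribution. -/
theorem no_dara_for_bounded_support
    (F G : ℝ → ℝ) (b : ℝ)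
    (hFmono : Monotone F) (hFb : F b = 1)
    (hF0 : Tendsto F atBot (nhds 0))
    (hGmono : Monotone G) (hGrange : ∀ x, G x ∈ Set.Ioo (0:ℝ) 1)
    (k : ℝ → ℝ) (hk : ∀ x, k x = sInf {t : ℝ | G x ≤ F t}) :
    ¬ StrictConvexOn ℝ Set.univ k := by
  -- each set is nonempty (contains b) and bounded below
  have hmem : ∀ x, b ∈ {t : ℝ | G x ≤ F t} := by
    intro x
    simp only [Set.mem_setOf_eq, hFb]
    exact (hGrange x).2.le
  have hbdd : ∀ x, BddBelow {t : ℝ | G x ≤ F t} := by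
    intro x
    have h := hF0.eventually (gt_mem_nhds (hGrange x).1)
    rw [eventually_atBot] at h
    obtain ⟨a, ha⟩ := h
    refine ⟨a, fun t ht => ?_⟩
    by_contra hc
    push_neg at hc
    exact absurd ht (not_le.mpr (ha t hc.le))
  -- k is bounded above by b
  have hkb : ∀ x, k x ≤ b := fun x => by
    rw [hk x]; exact csInf_le (hbdd x) (hmem x)
  -- k is monotone
  have hkmono : Monotone k := by
    intro x y hxy
    rw [hk x, hk y]
    refine csInf_le_csInf (hbdd x) ⟨b, hmem y⟩ ?_
    intro t ht
    exact le_trans (hGmono hxy) ht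
  intro hs
  have hc := hs.convexOn
  -- s := k 2 - k 1 > 0
  have h01 : (k 1 - k 0) / (1 - 0) < (k 2 - k 1) / (2 - 1) :=
    hs.slope_strict_mono_adjacent (Set.mem_univ 0) (Set.mem_univ 2)
      (by norm_num) (by norm_num)
  have hk01 : k 0 ≤ k 1 := hkmono (by norm_num)
  have hspos : 0 < k 2 - k 1 := by
    have := h01
    simp only [sub_zero, div_one] at this
    norm_num at this
    linarith
  set s := k 2 - k 1 with hsdef
  set x := max 3 (2 + (b - k 2 + 1) / s) with hxdef
  have hx3 : (3:ℝ) ≤ x := le_max_left _ _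
  have hx2 : (2:ℝ) < x := by linarith
  have hxge : 2 + (b - k 2 + 1) / s ≤ x := le_max_right _ _
  have hslope : (k 2 - k 1) / (2 - 1) ≤ (k x - k 2) / (x - 2) :=
    hc.slope_mono_adjacent (Set.mem_univ 1) (Set.mem_univ x)
      (by norm_num) hx2
  have hsx : s ≤ (k x - k 2) / (x - 2) := by
    have : (k 2 - k 1) / (2 - 1) = s := by norm_num; exact hsdef.symm
    linarith [hslope, this ▸ hslope]
  have hxm2 : (0:ℝ) < x - 2 := by linarith
  have h1 : s * (x - 2) ≤ k x - k 2 := by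
    have := (le_div_iff₀ hxm2).mp hsx
    linarith
  have h2 : (b - k 2 + 1) / s ≤ x - 2 := by linarith
  have h3 : b - k 2 + 1 ≤ s * (x - 2) := by
    have := (div_le_iff₀ hspos).mp h2
    nlinarith
  have := hkb x
  linarith
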